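/- Let n ≥ 2 be an integer and let μ be the Haar probability measure on the orthogonal group O(n) of n×n real matrices. Then ∫ Q₁₁⁴ dμ(Q) = 3 · ∫ Q₁₁²·Q₂₁² dμ(Q). -/

import Mathlib

open MeasureTheory Matrix

/-- The Borel (= product) σ-algebra on matrices. -/
instance matrixMeasurableSpace {m n α : Type*} [MeasurableSpace α] :
    MeasurableSpace (Matrix m n α) :=
  inferInstanceAs (MeasurableSpace (m → n → α))

section Rot
variable {n : ℕ}

lemma star_stdBasisMatrix' (a b : Fin n) :
    star (Matrix.single a b (1:ℝ)) = Matrix.single b a 1 := by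
  ext i j
  simp [Matrix.star_apply, Matrix.single, and_comm]

noncomputable def rotM (i0 i1 : Fin n) (c s : ℝ) : Matrix (Fin n) (Fin n) ℝ :=
  c • (Matrix.single i0 i0 1 + Matrix.single i1 i1 1)
    + s • (Matrix.single i1 i0 1 - Matrix.single i0 i1 1)
    + (1 - (Matrix.single i0 i0 1 + Matrix.single i1 i1 1))

lemma rotM_mem (i0 i1 : Fin n) (hne : i0 ≠ i1) (c s : ℝ) (h : c^2 + s^2 = 1) :
    rotM i0 i1 c s ∈ Matrix.orthogonalGroup (Fin n) ℝ := by
  rw [Matrix.mem_orthogonalGroup_iff']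
  set A := Matrix.single i0 i0 (1:ℝ) + Matrix.single i1 i1 1 with hA
  set B := Matrix.single i1 i0 (1:ℝ) - Matrix.single i0 i1 1 with hB
  have hAA : A * A = A := by
    simp [hA, add_mul, mul_add, hne, hne.symm]
  have hAB : A * B = B := by
    simp [hA, hB, add_mul, mul_add, mul_sub, hne, hne.symm]
  have hBA : B * A = B := by
    simp [hA, hB, add_mul, sub_mul, mul_add, hne, hne.symm]
    abel
  have hBB : B * B = -A := by
    simp [hA, hB, sub_mul, mul_sub, hne, hne.symm]
    abel
  have hsA : star A = A := by
    simp [hA, star_add, star_stdBasisMatrix']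
  have hsB : star B = -B := by
    rw [hB, star_sub, star_stdBasisMatrix', star_stdBasisMatrix', neg_sub]
  have hstar : star (rotM i0 i1 c s) = c • A + s • (-B) + (1 - A) := by
    rw [rotM, ← hA, ← hB, star_add, star_add, star_smul, star_smul, hsA, hsB, star_sub,
      star_one, hsA, star_trivial, star_trivial]
  have hrot : rotM i0 i1 c s = c • A + s • B + (1 - A) := by
    rw [rotM, ← hA, ← hB]
  have e1 : A * (1 - A) = 0 := by rw [mul_sub, mul_one, hAA, sub_self]
  have e2 : (1 - A) * A = 0 := by rw [sub_mul, one_mul, hAA, sub_self]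
  have e3 : B * (1 - A) = 0 := by rw [mul_sub, mul_one, hBA, sub_self]
  have e4 : (1 - A) * B = 0 := by rw [sub_mul, one_mul, hAB, sub_self]
  have e5 : (1 - A) * (1 - A) = 1 - A := by rw [sub_mul, one_mul, e1, sub_zero]
  change star (rotM i0 i1 c s) * rotM i0 i1 c s = 1
  rw [hstar, hrot]
  simp only [add_mul, mul_add, smul_mul_assoc, mul_smul_comm, smul_smul, neg_mul, mul_neg,
    smul_neg, neg_neg, hAA, hAB, hBA, hBB, e1, e2, e3, e4, e5, smul_zero, neg_zero,
    add_zero, zero_add]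
  have hc : c * c + s * s = 1 := by nlinarith
  have hfin : (c * c) • A + (s * s) • A + (1 - A) = 1 := by
    rw [← add_smul, hc, one_smul]; abel
  linear_combination (norm := module) hfin

lemma rotM_mul_apply0 (i0 i1 : Fin n) (hne : i0 ≠ i1) (c s : ℝ)
    (Q : Matrix (Fin n) (Fin n) ℝ) (j : Fin n) :
    (rotM i0 i1 c s * Q) i0 j = c * Q i0 j - s * Q i1 j := by
  simp [rotM, add_mul, sub_mul, smul_mul_assoc, Matrix.add_apply, Matrix.sub_apply,
    Matrix.smul_apply, hne, hne.symm, Matrix.one_apply, smul_eq_mul]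
  ring

lemma rotM_mul_apply1 (i0 i1 : Fin n) (hne : i0 ≠ i1) (c s : ℝ)
    (Q : Matrix (Fin n) (Fin n) ℝ) (j : Fin n) :
    (rotM i0 i1 c s * Q) i1 j = s * Q i0 j + c * Q i1 j := by
  simp [rotM, add_mul, sub_mul, smul_mul_assoc, Matrix.add_apply, Matrix.sub_apply,
    Matrix.smul_apply, hne, hne.symm, Matrix.one_apply, smul_eq_mul]
  ring

end Rot

instance {n : ℕ} : BorelSpace (Matrix (Fin n) (Fin n) ℝ) :=
  inferInstanceAs (BorelSpace ((Fin n) → (Fin n) → ℝ))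

instance {n : ℕ} : BorelSpace ↥(Matrix.orthogonalGroup (Fin n) ℝ) :=
  Subtype.borelSpace _

instance {n : ℕ} : MeasurableMul ↥(Matrix.orthogonalGroup (Fin n) ℝ) where
  measurable_mul_const g := (continuous_mul_right g).measurable
  measurable_const_mul g := (continuous_mul_left g).measurable

/-- for a Haar-distributed orthogonal matrix,
`∫ Q₁₁⁴ dμ = 3 ∫ Q₁₁²Q₂₁² dμ`. -/
theorem haar_orthogonal_fourth_moment_ratio
    (n : ℕ) (hn : 2 ≤ n)
    (μ : Measure ↥(Matrix.orthogonalGroup (Fin n) ℝ))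
    [IsProbabilityMeasure μ] [μ.IsMulLeftInvariant] :
    ∫ Q, ((Q : Matrix (Fin n) (Fin n) ℝ) ⟨0, by omega⟩ ⟨0, by omega⟩) ^ 4 ∂μ
      = 3 * ∫ Q, ((Q : Matrix (Fin n) (Fin n) ℝ) ⟨0, by omega⟩ ⟨0, by omega⟩) ^ 2
          * ((Q : Matrix (Fin n) (Fin n) ℝ) ⟨1, by omega⟩ ⟨0, by omega⟩) ^ 2 ∂μ := by
  have h0 : (0 : ℕ) < n := by omega
  have h1n : (1 : ℕ) < n := by omega
  set i0 : Fin n := ⟨0, h0⟩ with hi0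
  set i1 : Fin n := ⟨1, h1n⟩ with hi1
  have hne : i0 ≠ i1 := by simp [hi0, hi1, Fin.ext_iff]
  set G := ↥(Matrix.orthogonalGroup (Fin n) ℝ) with hG
  set X : G → ℝ := fun Q => (Q : Matrix (Fin n) (Fin n) ℝ) i0 i0 with hX
  set Y : G → ℝ := fun Q => (Q : Matrix (Fin n) (Fin n) ℝ) i1 i0 with hY
  show ∫ Q, X Q ^ 4 ∂μ = 3 * ∫ Q, X Q ^ 2 * Y Q ^ 2 ∂μ
  -- measurability
  have mcoe : Measurable (fun Q : G => (Q : Matrix (Fin n) (Fin n) ℝ)) :=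
    measurable_subtype_coe
  have m2 : Measurable fun v : Fin n → ℝ => v i0 := measurable_pi_apply i0
  have mr0 : Measurable fun M : Matrix (Fin n) (Fin n) ℝ => M i0 := measurable_pi_apply i0
  have mr1 : Measurable fun M : Matrix (Fin n) (Fin n) ℝ => M i1 := measurable_pi_apply i1
  have mX : Measurable X := m2.comp (mr0.comp mcoe)
  have mY : Measurable Y := m2.comp (mr1.comp mcoe)
  -- boundedness of entries
  have hb : ∀ (Q : G) (i : Fin n), |(Q : Matrix (Fin n) (Fin n) ℝ) i i0| ≤ 1 := by
    intro Q i
    have hQ : star (Q : Matrix (Fin n) (Fin n) ℝ) * (Q : Matrix (Fin n) (Fin n) ℝ) = 1 := Q.2.1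
    have hsum : ∑ k, ((Q : Matrix (Fin n) (Fin n) ℝ) k i0) ^ 2 = 1 := by
      have := congrFun (congrFun hQ i0) i0
      simpa [Matrix.mul_apply, Matrix.star_apply, Matrix.one_apply, sq] using this
    have hle : ((Q : Matrix (Fin n) (Fin n) ℝ) i i0) ^ 2 ≤ 1 := by
      rw [← hsum]
      exact Finset.single_le_sum
        (f := fun k => ((Q : Matrix (Fin n) (Fin n) ℝ) k i0) ^ 2)
        (fun k _ => sq_nonneg _) (Finset.mem_univ i)
    nlinarith [abs_nonneg ((Q : Matrix (Fin n) (Fin n) ℝ) i i0),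
      sq_abs ((Q : Matrix (Fin n) (Fin n) ℝ) i i0)]
  have hbX : ∀ Q : G, |X Q| ≤ 1 := fun Q => hb Q i0
  have hbY : ∀ Q : G, |Y Q| ≤ 1 := fun Q => hb Q i1
  -- integrability of bounded measurable functions
  have hInt : ∀ f : G → ℝ, Measurable f → (∀ x, |f x| ≤ 1) → Integrable f μ := by
    intro f hm hbd
    refine (integrable_const (1 : ℝ)).mono' hm.aestronglyMeasurable ?_
    filter_upwards with x
    simpa [Real.norm_eq_abs] using hbd x
  have bnd : ∀ (a b : ℕ) (Q : G), |X Q ^ a * Y Q ^ b| ≤ 1 := by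
    intro a b Q
    rw [abs_mul, abs_pow, abs_pow]
    exact mul_le_one₀ (pow_le_one₀ (abs_nonneg _) (hbX Q))
      (pow_nonneg (abs_nonneg _) _) (pow_le_one₀ (abs_nonneg _) (hbY Q))
  have I40 : Integrable (fun Q => X Q ^ 4) μ :=
    hInt _ (mX.pow_const 4) (fun Q => by simpa using bnd 4 0 Q)
  have I22 : Integrable (fun Q => X Q ^ 2 * Y Q ^ 2) μ :=
    hInt _ ((mX.pow_const 2).mul (mY.pow_const 2)) (bnd 2 2)
  have I04 : Integrable (fun Q => Y Q ^ 4) μ :=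
    hInt _ (mY.pow_const 4) (fun Q => by simpa using bnd 0 4 Q)
  have I31 : Integrable (fun Q => X Q ^ 3 * Y Q) μ :=
    hInt _ ((mX.pow_const 3).mul mY) (fun Q => by simpa using bnd 3 1 Q)
  have I13 : Integrable (fun Q => X Q * Y Q ^ 3) μ :=
    hInt _ (mX.mul (mY.pow_const 3)) (fun Q => by simpa using bnd 1 3 Q)
  -- the key invariance identity
  have key : ∀ c s : ℝ, c ^ 2 + s ^ 2 = 1 →
      c ^ 4 * ∫ Q, X Q ^ 4 ∂μ + 6 * (c ^ 2 * s ^ 2) * ∫ Q, X Q ^ 2 * Y Q ^ 2 ∂μ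
        + s ^ 4 * ∫ Q, Y Q ^ 4 ∂μ - 4 * (c ^ 3 * s) * ∫ Q, X Q ^ 3 * Y Q ∂μ
        - 4 * (c * s ^ 3) * ∫ Q, X Q * Y Q ^ 3 ∂μ = ∫ Q, X Q ^ 4 ∂μ := by
    intro c s hcs
    set g : G := ⟨rotM i0 i1 c s, rotM_mem i0 i1 hne c s hcs⟩ with hg
    have hXg : ∀ Q : G, X (g * Q) = c * X Q - s * Y Q := by
      intro Q
      show ((g * Q : G) : Matrix (Fin n) (Fin n) ℝ) i0 i0 = _
      have : ((g * Q : G) : Matrix (Fin n) (Fin n) ℝ)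
          = rotM i0 i1 c s * (Q : Matrix (Fin n) (Fin n) ℝ) := rfl
      rw [this, rotM_mul_apply0 i0 i1 hne]
    have h1 : ∫ Q, X (g * Q) ^ 4 ∂μ = ∫ Q, X Q ^ 4 ∂μ :=
      integral_mul_left_eq_self (fun Q => X Q ^ 4) g
    calc c ^ 4 * ∫ Q, X Q ^ 4 ∂μ + 6 * (c ^ 2 * s ^ 2) * ∫ Q, X Q ^ 2 * Y Q ^ 2 ∂μ
            + s ^ 4 * ∫ Q, Y Q ^ 4 ∂μ - 4 * (c ^ 3 * s) * ∫ Q, X Q ^ 3 * Y Q ∂μ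
            - 4 * (c * s ^ 3) * ∫ Q, X Q * Y Q ^ 3 ∂μ
        = ∫ Q, (c ^ 4 * X Q ^ 4 + 6 * (c ^ 2 * s ^ 2) * (X Q ^ 2 * Y Q ^ 2)
            + s ^ 4 * Y Q ^ 4 - 4 * (c ^ 3 * s) * (X Q ^ 3 * Y Q)
            - 4 * (c * s ^ 3) * (X Q * Y Q ^ 3)) ∂μ := by
          have J40 : Integrable (fun Q => c ^ 4 * X Q ^ 4) μ := I40.const_mul _
          have J22 : Integrable (fun Q => 6 * (c ^ 2 * s ^ 2) * (X Q ^ 2 * Y Q ^ 2)) μ :=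
            I22.const_mul _
          have J04 : Integrable (fun Q => s ^ 4 * Y Q ^ 4) μ := I04.const_mul _
          have J31 : Integrable (fun Q => 4 * (c ^ 3 * s) * (X Q ^ 3 * Y Q)) μ :=
            I31.const_mul _
          have J13 : Integrable (fun Q => 4 * (c * s ^ 3) * (X Q * Y Q ^ 3)) μ :=
            I13.const_mul _
          have S2 : Integrable (fun Q => c ^ 4 * X Q ^ 4
              + 6 * (c ^ 2 * s ^ 2) * (X Q ^ 2 * Y Q ^ 2)) μ := J40.add J22
          have S3 : Integrable (fun Q => c ^ 4 * X Q ^ 4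
              + 6 * (c ^ 2 * s ^ 2) * (X Q ^ 2 * Y Q ^ 2) + s ^ 4 * Y Q ^ 4) μ := S2.add J04
          have S4 : Integrable (fun Q => c ^ 4 * X Q ^ 4
              + 6 * (c ^ 2 * s ^ 2) * (X Q ^ 2 * Y Q ^ 2) + s ^ 4 * Y Q ^ 4
              - 4 * (c ^ 3 * s) * (X Q ^ 3 * Y Q)) μ := S3.sub J31
          rw [integral_sub S4 J13, integral_sub S3 J31, integral_add S2 J04,
            integral_add J40 J22, integral_const_mul, integral_const_mul,
            integral_const_mul, integral_const_mul, integral_const_mul]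
      _ = ∫ Q, (c * X Q - s * Y Q) ^ 4 ∂μ := by
          apply integral_congr_ae
          filter_upwards with Q
          ring
      _ = ∫ Q, X (g * Q) ^ 4 ∂μ := by
          apply integral_congr_ae
          filter_upwards with Q
          rw [hXg Q]
      _ = ∫ Q, X Q ^ 4 ∂μ := h1
  have k1 := key (3/5) (4/5) (by norm_num)
  have k2 := key (3/5) (-4/5) (by norm_num)
  have k3 := key 0 1 (by norm_num)
  norm_num at k1 k2 k3
  linarith [k1, k2, k3]
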